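/- Suppose real-valued functions λ₁₂, λ₁₃, λ₂₃, λ̃, λ₃ of t ≥ t₀ satisfy λ₂₃(t), λ₃(t) ≥ c₁/t², λ₁₃(t) ≥ c₃ ln(t₀)/(t² ln(t)²), |λ₁₂(t)|, |λ̃(t)| ≤ c₂ ln(t₀)/(t² ln(t)²), and λ₁₂(t) + λ₁₃(t) ≥ c₄ ln(t₀)/(t² ln(t)²) for positive constants c₁, c₂, c₃, c₄. Then for t₀ sufficiently large (depending only on the cᵢ), for all t ≥ max(t₀, e): (a) λ₁₂ + (λ₁₃+λ₂₃)/2 > 0; (b) (λ₁₂+λ₁₃)(λ₁₂+λ₂₃) > λ̃²; (c) λ₁₃λ₂₃ > λ̃²; (d) λ₁₃, λ₂₃, λ₃ > 0. -/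

import Mathlib

private lemma keylem (c₁ K s L0 L : ℝ) (hc₁ : 0 < c₁) (hs : 0 < s) (hK0 : 0 ≤ K)
    (hL0 : 0 < L0) (hL0L : L0 ≤ L) (hK : K < c₁ * L0) :
    K * (L0 / (s * L ^ 2)) < c₁ / s := by
  have hL : 0 < L := lt_of_lt_of_le hL0 hL0L
  rw [mul_div_assoc', div_lt_div_iff₀ (by positivity) hs]
  have h0 : L0 * L0 ≤ L * L := mul_le_mul hL0L hL0L (le_of_lt hL0) (le_of_lt hL)
  have h1 : K * L0 < c₁ * (L0 * L0) := by nlinarith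
  have h2 : c₁ * (L0 * L0) ≤ c₁ * (L * L) := by nlinarith
  nlinarith

private lemma auxlem (c₂ c₃ c₄ A B x12 x13 x23 xt x3 : ℝ)
    (hc₃ : 0 < c₃) (hc₄ : 0 < c₄) (hA : 0 < A) (hB : 0 < B)
    (k1 : c₂ * A < B) (k2 : c₂ ^ 2 * A < c₄ * (B - c₂ * A)) (k3 : c₂ ^ 2 * A < c₃ * B)
    (H23 : B ≤ x23) (H3 : B ≤ x3) (H13 : c₃ * A ≤ x13) (H12 : |x12| ≤ c₂ * A)
    (Hxt : |xt| ≤ c₂ * A) (H1213 : c₄ * A ≤ x12 + x13) :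
    (x12 + (x13 + x23) / 2 > 0) ∧ ((x12 + x13) * (x12 + x23) > xt ^ 2) ∧
    (x13 * x23 > xt ^ 2) ∧ (x13 > 0 ∧ x23 > 0 ∧ x3 > 0) := by
  have H12' := abs_le.mp H12
  have Hxt' := abs_le.mp Hxt
  have hxt2 : xt ^ 2 ≤ (c₂ * A) ^ 2 := sq_le_sq' Hxt'.1 Hxt'.2
  have P13 : 0 < x13 := lt_of_lt_of_le (by positivity) H13
  have P23 : 0 < x23 := lt_of_lt_of_le hB H23
  have P3 : 0 < x3 := lt_of_lt_of_le hB H3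
  have P1223 : B - c₂ * A ≤ x12 + x23 := by linarith [H12'.1]
  have P1223pos : 0 < B - c₂ * A := by linarith
  have P1213pos : 0 < x12 + x13 := lt_of_lt_of_le (by positivity) H1213
  refine ⟨by linarith, ?_, ?_, P13, P23, P3⟩
  · have hprod : c₄ * A * (B - c₂ * A) ≤ (x12 + x13) * (x12 + x23) :=
      mul_le_mul H1213 P1223 (le_of_lt P1223pos) (le_of_lt P1213pos)
    nlinarith [mul_lt_mul_of_pos_right k2 hA]
  · have hprod : c₃ * A * B ≤ x13 * x23 :=
      mul_le_mul H13 H23 (le_of_lt hB) (le_of_lt P13)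
    nlinarith [mul_lt_mul_of_pos_right k3 hA]

/-- the decay estimates imply the Ric₂ > 0 criterion (Proposition 2.2
with k = 2) for t₀ sufficiently large, depending only on the constants c₁, c₂, c₃, c₄. -/
theorem stmt11 (c₁ c₂ c₃ c₄ : ℝ) (hc₁ : 0 < c₁) (hc₂ : 0 < c₂) (hc₃ : 0 < c₃)
    (hc₄ : 0 < c₄) :
    ∃ T : ℝ, ∀ t₀ : ℝ, T ≤ t₀ →
      ∀ l12 l13 l23 lt l3 : ℝ → ℝ,
        (∀ t, t₀ ≤ t → c₁ / t ^ 2 ≤ l23 t) →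
        (∀ t, t₀ ≤ t → c₁ / t ^ 2 ≤ l3 t) →
        (∀ t, t₀ ≤ t → c₃ * Real.log t₀ / (t ^ 2 * Real.log t ^ 2) ≤ l13 t) →
        (∀ t, t₀ ≤ t → |l12 t| ≤ c₂ * Real.log t₀ / (t ^ 2 * Real.log t ^ 2)) →
        (∀ t, t₀ ≤ t → |lt t| ≤ c₂ * Real.log t₀ / (t ^ 2 * Real.log t ^ 2)) →
        (∀ t, t₀ ≤ t → c₄ * Real.log t₀ / (t ^ 2 * Real.log t ^ 2) ≤ l12 t + l13 t) →
        ∀ t, max t₀ (Real.exp 1) ≤ t →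
          (l12 t + (l13 t + l23 t) / 2 > 0) ∧
          ((l12 t + l13 t) * (l12 t + l23 t) > lt t ^ 2) ∧
          (l13 t * l23 t > lt t ^ 2) ∧
          (l13 t > 0 ∧ l23 t > 0 ∧ l3 t > 0) := by
  obtain ⟨M, hM1, hMgt⟩ :
      ∃ M : ℝ, 1 ≤ M ∧ c₂ + c₂ ^ 2 / c₄ + c₂ ^ 2 / c₃ < c₁ * M := by
    refine ⟨1 + (c₂ + c₂ ^ 2 / c₄ + c₂ ^ 2 / c₃) / c₁, ?_, ?_⟩
    · have : 0 ≤ (c₂ + c₂ ^ 2 / c₄ + c₂ ^ 2 / c₃) / c₁ := by positivity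
      linarith
    · have h : c₁ * (1 + (c₂ + c₂ ^ 2 / c₄ + c₂ ^ 2 / c₃) / c₁)
          = c₁ + (c₂ + c₂ ^ 2 / c₄ + c₂ ^ 2 / c₃) := by field_simp
      linarith
  refine ⟨Real.exp M, ?_⟩
  intro t₀ hT l12 l13 l23 lt l3 h23 h3 h13 h12 hlt h1213 t ht
  have htt0 : t₀ ≤ t := le_trans (le_max_left _ _) ht
  have hte : Real.exp 1 ≤ t := le_trans (le_max_right _ _) ht
  have ht0pos : (0:ℝ) < t₀ := lt_of_lt_of_le (Real.exp_pos M) hT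
  have htpos : (0:ℝ) < t := lt_of_lt_of_le (Real.exp_pos 1) hte
  have hL0 : M ≤ Real.log t₀ := by
    have := Real.log_le_log (Real.exp_pos M) hT
    rwa [Real.log_exp] at this
  have hL0L : Real.log t₀ ≤ Real.log t := Real.log_le_log ht0pos htt0
  have hL0pos : (0:ℝ) < Real.log t₀ := by linarith
  have hs : (0:ℝ) < t ^ 2 := by positivity
  have hLpos : (0:ℝ) < Real.log t := lt_of_lt_of_le hL0pos hL0L
  have hApos : (0:ℝ) < Real.log t₀ / (t ^ 2 * Real.log t ^ 2) :=
    div_pos hL0pos (mul_pos hs (pow_pos hLpos 2))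
  have hBpos : (0:ℝ) < c₁ / t ^ 2 := by positivity
  have hq4 : (0:ℝ) ≤ c₂ ^ 2 / c₄ := by positivity
  have hq3 : (0:ℝ) ≤ c₂ ^ 2 / c₃ := by positivity
  have hbig : c₂ + c₂ ^ 2 / c₄ + c₂ ^ 2 / c₃ < c₁ * Real.log t₀ := by nlinarith
  have key : ∀ K : ℝ, 0 ≤ K → K < c₁ * Real.log t₀ →
      K * (Real.log t₀ / (t ^ 2 * Real.log t ^ 2)) < c₁ / t ^ 2 := fun K hK0 hK =>
    keylem c₁ K (t ^ 2) (Real.log t₀) (Real.log t) hc₁ hs hK0 hL0pos hL0L hK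
  have k1 : c₂ * (Real.log t₀ / (t ^ 2 * Real.log t ^ 2)) < c₁ / t ^ 2 :=
    key c₂ (le_of_lt hc₂) (by linarith)
  have k2' : (c₂ + c₂ ^ 2 / c₄) * (Real.log t₀ / (t ^ 2 * Real.log t ^ 2)) < c₁ / t ^ 2 :=
    key _ (by linarith) (by linarith)
  have k3' : (c₂ ^ 2 / c₃) * (Real.log t₀ / (t ^ 2 * Real.log t ^ 2)) < c₁ / t ^ 2 :=
    key _ hq3 (by linarith)
  have hcc4 : c₄ * (c₂ ^ 2 / c₄) = c₂ ^ 2 := by field_simp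
  have hcc3 : c₃ * (c₂ ^ 2 / c₃) = c₂ ^ 2 := by field_simp
  have k2 : c₂ ^ 2 * (Real.log t₀ / (t ^ 2 * Real.log t ^ 2)) <
      c₄ * (c₁ / t ^ 2 - c₂ * (Real.log t₀ / (t ^ 2 * Real.log t ^ 2))) := by
    nlinarith [mul_lt_mul_of_pos_left k2' hc₄]
  have k3 : c₂ ^ 2 * (Real.log t₀ / (t ^ 2 * Real.log t ^ 2)) <
      c₃ * (c₁ / t ^ 2) := by
    nlinarith [mul_lt_mul_of_pos_left k3' hc₃]
  have H13 := h13 t htt0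
  have H12 := h12 t htt0
  have Hlt := hlt t htt0
  have H1213 := h1213 t htt0
  rw [mul_div_assoc] at H13 H12 Hlt H1213
  exact auxlem c₂ c₃ c₄ (Real.log t₀ / (t ^ 2 * Real.log t ^ 2)) (c₁ / t ^ 2)
    (l12 t) (l13 t) (l23 t) (lt t) (l3 t) hc₃ hc₄ hApos hBpos k1 k2 k3
    (h23 t htt0) (h3 t htt0) H13 H12 Hlt H1213
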